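/- Let H₁ and H₂ be Hilbert spaces, T : D₁ → D₂ a linear bijection between subspaces D₁ ⊆ H₁ and D₂ ⊆ H₂ such that ‖Tf‖_{H₂} = ‖f‖_{H₁} for all f ∈ D₁, and suppose (E₂, D₂) is a closed symmetric form on H₂ with E₁(f,g) := E₂(Tf, Tg) defining a form on D₁. Let G²_α be the resolvent of (E₂, D₂) on H₂ (i.e., E₂(G²_α h, g) + α⟨G²_α h, g⟩ = ⟨h, g⟩ for g ∈ D₂). Extend T to an isometry T̄ : closure(D₁) → H₂ and suppose D₂ is dense in H₂. Then the resolvent G¹_α of (E₁, D₁) on H₁ satisfies G¹_α f = T̄⁻¹ G²_α (T̄ Π f) for every f ∈ H₁, where Π is the orthogonal projection of H₁ onto closure(D₁). -/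

import Mathlib

open Filter Topology

/-- Transfer of resolvents across an isometric form-preserving bijection `T` between
the (not necessarily dense) form domain `D₁ ⊆ H₁` and a dense domain `D₂ ⊆ H₂`:
`G¹_α f = T̄⁻¹ G²_α (T̄ (proj f))`. -/
theorem stmt11
    {H₁ : Type*} [NormedAddCommGroup H₁] [InnerProductSpace ℝ H₁] [CompleteSpace H₁]
    {H₂ : Type*} [NormedAddCommGroup H₂] [InnerProductSpace ℝ H₂] [CompleteSpace H₂]
    (D₁ : Submodule ℝ H₁) (D₂ : Submodule ℝ H₂) (hdense : Dense (D₂ : Set H₂))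
    (T : H₁ → H₂)
    (hT_mem : ∀ f ∈ D₁, T f ∈ D₂)
    (hT_surj : ∀ h ∈ D₂, ∃ f ∈ D₁, T f = h)
    (hT_add : ∀ f ∈ D₁, ∀ g ∈ D₁, T (f + g) = T f + T g)
    (hT_smul : ∀ (c : ℝ), ∀ f ∈ D₁, T (c • f) = c • T f)
    (hT_iso : ∀ f ∈ D₁, ‖T f‖ = ‖f‖)
    -- the closed symmetric form E₂ on D₂ (E₁ is its pull-back by T)
    (𝓔₂ : H₂ →ₗ[ℝ] H₂ →ₗ[ℝ] ℝ)
    (hsym : ∀ u ∈ D₂, ∀ v ∈ D₂, 𝓔₂ u v = 𝓔₂ v u)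
    (hpos : ∀ u ∈ D₂, 0 ≤ 𝓔₂ u u)
    -- the resolvent of (E₂, D₂) on H₂
    (G2 : ℝ → H₂ → H₂)
    (hG2 : ∀ α : ℝ, 0 < α → ∀ h : H₂, G2 α h ∈ D₂ ∧
      ∀ g ∈ D₂, 𝓔₂ (G2 α h) g + α * (inner ℝ (G2 α h) g : ℝ) = (inner ℝ h g : ℝ))
    -- the isometric extension T̄ of T to the closure of D₁, and its inverse
    (Tbar : H₁ → H₂) (Tinv : H₂ → H₁)
    (hTbar_eq : ∀ f ∈ D₁, Tbar f = T f)
    (hTbar_iso : ∀ f ∈ closure (D₁ : Set H₁), ‖Tbar f‖ = ‖f‖)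
    (hTbar_add : ∀ f ∈ closure (D₁ : Set H₁), ∀ g ∈ closure (D₁ : Set H₁),
      Tbar (f + g) = Tbar f + Tbar g)
    (hTbar_smul : ∀ (c : ℝ), ∀ f ∈ closure (D₁ : Set H₁), Tbar (c • f) = c • Tbar f)
    (hTinv_left : ∀ f ∈ closure (D₁ : Set H₁), Tinv (Tbar f) = f)
    (hTinv_right : ∀ h : H₂, Tinv h ∈ closure (D₁ : Set H₁) ∧ Tbar (Tinv h) = h)
    -- the orthogonal projection of H₁ onto the closure of D₁
    (proj : H₁ → H₁)
    (hproj_mem : ∀ f : H₁, proj f ∈ closure (D₁ : Set H₁))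
    (hproj_orth : ∀ f : H₁, ∀ g ∈ closure (D₁ : Set H₁), (inner ℝ (f - proj f) g : ℝ) = 0)
    -- the resolvent of the pulled-back form (E₁, D₁) on H₁
    (G1 : ℝ → H₁ → H₁)
    (hG1 : ∀ α : ℝ, 0 < α → ∀ f : H₁, G1 α f ∈ D₁ ∧
      ∀ g ∈ D₁, 𝓔₂ (T (G1 α f)) (T g) + α * (inner ℝ (G1 α f) g : ℝ) = (inner ℝ f g : ℝ)) :
    ∀ α : ℝ, 0 < α → ∀ f : H₁, G1 α f = Tinv (G2 α (Tbar (proj f))) := by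
  -- Tbar preserves inner products on the closure of D₁
  have hclos : ∀ x ∈ closure (D₁ : Set H₁), ∀ y ∈ closure (D₁ : Set H₁),
      x + y ∈ closure (D₁ : Set H₁) := by
    intro x hx y hy
    have hx' : x ∈ D₁.topologicalClosure := by
      rwa [← Submodule.topologicalClosure_coe] at hx
    have hy' : y ∈ D₁.topologicalClosure := by
      rwa [← Submodule.topologicalClosure_coe] at hy
    have := D₁.topologicalClosure.add_mem hx' hy'
    rwa [← SetLike.mem_coe, Submodule.topologicalClosure_coe] at this
  have hinner : ∀ x ∈ closure (D₁ : Set H₁), ∀ y ∈ closure (D₁ : Set H₁),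
      (inner ℝ (Tbar x) (Tbar y) : ℝ) = (inner ℝ x y : ℝ) := by
    intro x hx y hy
    have h1 : ‖Tbar x + Tbar y‖ ^ 2 = ‖x + y‖ ^ 2 := by
      rw [← hTbar_add x hx y hy, hTbar_iso _ (hclos x hx y hy)]
    rw [@norm_add_sq_real _ _ _ (Tbar x), @norm_add_sq_real _ _ _ x,
      hTbar_iso x hx, hTbar_iso y hy] at h1
    linarith
  intro α hα f
  obtain ⟨huD, hu⟩ := hG1 α hα f
  set u := G1 α f with hu_def
  set h := Tbar (proj f) with hh_def
  obtain ⟨hvD, hv⟩ := hG2 α hα h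
  set v := G2 α h with hv_def
  -- T u satisfies the same resolvent equation as v = G2 α h
  have key : ∀ g ∈ D₂, 𝓔₂ (T u) g + α * (inner ℝ (T u) g : ℝ) = (inner ℝ h g : ℝ) := by
    intro g hg
    obtain ⟨g', hg', rfl⟩ := hT_surj g hg
    have hg'c : g' ∈ closure (D₁ : Set H₁) := subset_closure hg'
    have huc : u ∈ closure (D₁ : Set H₁) := subset_closure huD
    have h1 := hu g' hg'
    have h2 : (inner ℝ (T u) (T g') : ℝ) = (inner ℝ u g' : ℝ) := by
      rw [← hTbar_eq u huD, ← hTbar_eq g' hg']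
      exact hinner u huc g' hg'c
    have h3 : (inner ℝ f g' : ℝ) = (inner ℝ h (T g') : ℝ) := by
      have horth := hproj_orth f g' hg'c
      have : (inner ℝ f g' : ℝ) = (inner ℝ (proj f) g' : ℝ) := by
        have := inner_sub_left (𝕜 := ℝ) f (proj f) g'
        rw [horth] at this; linarith
      rw [this, hh_def, ← hTbar_eq g' hg']
      exact (hinner (proj f) (hproj_mem f) g' hg'c).symm
    rw [h2, ← h3]
    exact h1
  -- difference w = T u - v satisfies the homogeneous equation, hence is 0
  have hTuD : T u ∈ D₂ := hT_mem u huD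
  have hwD : T u - v ∈ D₂ := D₂.sub_mem hTuD hvD
  have hzero : ∀ g ∈ D₂, 𝓔₂ (T u - v) g + α * (inner ℝ (T u - v) g : ℝ) = 0 := by
    intro g hg
    have h1 := key g hg
    have h2 := hv g hg
    have e1 : 𝓔₂ (T u - v) g = 𝓔₂ (T u) g - 𝓔₂ v g := by
      rw [map_sub]; rfl
    rw [e1, inner_sub_left]
    ring_nf
    ring_nf at h1 h2
    linarith
  have hw0 : T u - v = 0 := by
    have h1 := hzero _ hwD
    have h2 : 0 ≤ 𝓔₂ (T u - v) (T u - v) := hpos _ hwD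
    have h3 : (inner ℝ (T u - v) (T u - v) : ℝ) = 0 := by
      have h4 : 0 ≤ (inner ℝ (T u - v) (T u - v) : ℝ) := real_inner_self_nonneg
      nlinarith
    exact inner_self_eq_zero.mp h3
  have hTu : T u = v := by
    have := sub_eq_zero.mp hw0; exact this
  rw [← hTu, ← hTbar_eq u huD, hTinv_left u (subset_closure huD)]
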